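/- For every prime power q > 3, the girth of Λ_{5,q} is exactly 10. -/

import Mathlib

/-- Vertices of one side of the graph `Λ(k,q)`: tuples of `k+1` elements of `F`,
modelled as functions `ℕ → F` vanishing above index `k`. -/
abbrev PVec (F : Type*) [Zero F] (k : ℕ) : Type _ := {f : ℕ → F // ∀ i, k < i → f i = 0}

/-- Adjacency condition between a left vertex `[l]` (with `l 1 = l 2`) and a right
vertex `⟨r⟩` (with `r 1 = 0`) in `Λ(k,q)`: for `2 ≤ i ≤ k`,
`l i + r i = r 0 * l (i-2)` if `i ≡ 2, 3 (mod 4)` and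
`l i + r i = l 0 * r (i-2)` if `i ≡ 0, 1 (mod 4)`. -/
def lamAdjLR {F : Type*} [Field F] (k : ℕ) (l r : ℕ → F) : Prop :=
  l 1 = l 2 ∧ r 1 = 0 ∧ ∀ i, 2 ≤ i → i ≤ k →
    ((i % 4 = 2 ∨ i % 4 = 3) → l i + r i = r 0 * l (i - 2)) ∧
    ((i % 4 = 0 ∨ i % 4 = 1) → l i + r i = l 0 * r (i - 2))

/-- The bipartite graph `Λ(k,q)` (the graph `Λ_{k,q}` of the paper, isomorphic to `D(k,q)`). -/
def LambdaGraph (F : Type*) [Field F] (k : ℕ) : SimpleGraph (PVec F k ⊕ PVec F k) where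
  Adj x y := match x, y with
    | Sum.inl l, Sum.inr r => lamAdjLR k l.1 r.1
    | Sum.inr r, Sum.inl l => lamAdjLR k l.1 r.1
    | _, _ => False
  symm := ⟨by rintro (l | r) (l' | r') h <;> exact h⟩
  loopless := ⟨by rintro (l | r) h <;> exact h⟩

section Helpers

variable {F : Type*} [Field F]

/-- Extract the four component equations from an adjacency, normalising `l 1` to `l 2`. -/
private lemma adj_eqs {l r : ℕ → F} (h : lamAdjLR 5 l r) :
    l 2 + r 2 = r 0 * l 0 ∧ l 3 + r 3 = r 0 * l 2 ∧
    l 4 + r 4 = l 0 * r 2 ∧ l 5 + r 5 = l 0 * r 3 := by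
  obtain ⟨h12, -, hi⟩ := h
  refine ⟨(hi 2 (by norm_num) (by norm_num)).1 (Or.inl rfl), ?_,
    (hi 4 (by norm_num) (by norm_num)).2 (Or.inl rfl),
    (hi 5 (by norm_num) (by norm_num)).2 (Or.inr rfl)⟩
  have := (hi 3 (by norm_num) (by norm_num)).1 (Or.inr rfl)
  rwa [h12] at this

/-- A left vertex is determined by its first coordinate and a common right neighbour. -/
private lemma left_eq {l l' r : PVec F 5} (h : lamAdjLR 5 l.1 r.1)
    (h' : lamAdjLR 5 l'.1 r.1) (h0 : l.1 0 = l'.1 0) : l = l' := by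
  obtain ⟨e2, e3, e4, e5⟩ := adj_eqs h
  obtain ⟨e2', e3', e4', e5'⟩ := adj_eqs h'
  have h2 : l.1 2 = l'.1 2 := by linear_combination e2 - e2' + r.1 0 * h0
  refine Subtype.ext (funext fun i => ?_)
  match i with
  | 0 => exact h0
  | 1 => rw [h.1, h'.1]; exact h2
  | 2 => exact h2
  | 3 => linear_combination e3 - e3' + r.1 0 * h2
  | 4 => linear_combination e4 - e4' + r.1 2 * h0
  | 5 => linear_combination e5 - e5' + r.1 3 * h0
  | (n+6) => rw [l.2 (n+6) (by omega), l'.2 (n+6) (by omega)]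

/-- A right vertex is determined by its first coordinate and a common left neighbour. -/
private lemma right_eq {l r r' : PVec F 5} (h : lamAdjLR 5 l.1 r.1)
    (h' : lamAdjLR 5 l.1 r'.1) (h0 : r.1 0 = r'.1 0) : r = r' := by
  obtain ⟨e2, e3, e4, e5⟩ := adj_eqs h
  obtain ⟨e2', e3', e4', e5'⟩ := adj_eqs h'
  have h2 : r.1 2 = r'.1 2 := by linear_combination e2 - e2' - l.1 2 * 0 + l.1 0 * 0 + (l.1 0) * 0 + h0 * l.1 0
  have h3 : r.1 3 = r'.1 3 := by linear_combination e3 - e3' + h0 * l.1 2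
  refine Subtype.ext (funext fun i => ?_)
  match i with
  | 0 => exact h0
  | 1 => rw [h.2.1, h'.2.1]
  | 2 => exact h2
  | 3 => exact h3
  | 4 => linear_combination e4 - e4' + l.1 0 * h2
  | 5 => linear_combination e5 - e5' + l.1 0 * h3
  | (n+6) => rw [r.2 (n+6) (by omega), r'.2 (n+6) (by omega)]

private lemma left_ne {l l' r : PVec F 5} (h : lamAdjLR 5 l.1 r.1)
    (h' : lamAdjLR 5 l'.1 r.1) (hne : l ≠ l') : l.1 0 ≠ l'.1 0 :=
  fun h0 => hne (left_eq h h' h0)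

private lemma right_ne {l r r' : PVec F 5} (h : lamAdjLR 5 l.1 r.1)
    (h' : lamAdjLR 5 l.1 r'.1) (hne : r ≠ r') : r.1 0 ≠ r'.1 0 :=
  fun h0 => hne (right_eq h h' h0)

/-- Walks in the bipartite graph have even length iff endpoints are on the same side. -/
private lemma walk_parity {x y : PVec F 5 ⊕ PVec F 5}
    (w : (LambdaGraph F 5).Walk x y) : Even w.length ↔ x.isLeft = y.isLeft := by
  induction w with
  | nil => simp
  | @cons u v z h p ih =>
    rw [SimpleGraph.Walk.length_cons, Nat.even_add_one, ih]
    rcases u with l | r <;> rcases v with l' | r'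
    · exact absurd h (by exact id)
    · cases hy : y.isLeft <;> simp
    · cases hy : y.isLeft <;> simp
    · exact absurd h (by exact id)

private lemma walk_succ {V : Type*} {G : SimpleGraph V} {a b : V} {n : ℕ} (w : G.Walk a b)
    (h : w.length = n + 1) :
    ∃ (c : V) (hadj : G.Adj a c) (w' : G.Walk c b),
      w = SimpleGraph.Walk.cons hadj w' ∧ w'.length = n := by
  cases w with
  | nil => simp at h
  | cons hadj w' => exact ⟨_, hadj, w', rfl, by simpa using h⟩

end Helpers


private lemma noCycle2 {F : Type*} [Field F] (a1 a2 b1 b2 p1 p2 s1 s2 : F)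
    (hLp1 : p1 + s1 = b1*a1) (hRp1 : p2 + s1 = b1*a2)
    (hLp2 : p2 + s2 = b2*a2) (hRp2 : p1 + s2 = b2*a1)
    (ha : a1 ≠ a2) (hb : b1 ≠ b2) : False := by
  have h : (a2 - a1) * (b2 - b1) = 0 := by
    linear_combination (-1 : F)*hLp1 - hLp2 + hRp1 + hRp2
  rcases mul_eq_zero.1 h with h | h
  · exact ha (by linear_combination -h)
  · exact hb (by linear_combination -h)

private lemma noCycle3 {F : Type*} [Field F]
    (a1 a2 a3 b1 b2 b3 p1 p2 p3 u1 u2 u3 s1 s2 s3 t1 t2 t3 : F)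
    (hLp1 : p1 + s1 = b1*a1) (hRp1 : p2 + s1 = b1*a2)
    (hLp2 : p2 + s2 = b2*a2) (hRp2 : p3 + s2 = b2*a3)
    (hLp3 : p3 + s3 = b3*a3) (hRp3 : p1 + s3 = b3*a1)
    (hLu1 : u1 + t1 = b1*p1) (hRu1 : u2 + t1 = b1*p2)
    (hLu2 : u2 + t2 = b2*p2) (hRu2 : u3 + t2 = b2*p3)
    (hLu3 : u3 + t3 = b3*p3) (hRu3 : u1 + t3 = b3*p1)
    (ha : a1 ≠ a2) (hb12 : b1 ≠ b2) (hb31 : b3 ≠ b1) : False := by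
  have h : (a2 - a1) * ((b1 - b3) * (b1 - b2)) = 0 := by
    linear_combination (b1 - b2 - b3)*hLp1 - b3*hLp2 - b2*hLp3
      + hLu1 + hLu2 + hLu3
      + (b2 + b3 - b1)*hRp1 + b3*hRp2 + b2*hRp3 - hRu1 - hRu2 - hRu3
  rcases mul_eq_zero.1 h with h | h
  · exact ha (by linear_combination -h)
  rcases mul_eq_zero.1 h with h | h
  · exact hb31 (by linear_combination -h)
  · exact hb12 (by linear_combination h)

private lemma noCycle4 {F : Type*} [Field F]
    (a1 a2 a3 a4 b1 b2 b3 b4 p1 p2 p3 p4 u1 u2 u3 u4 v1 v2 v3 v4 w1 w2 w3 w4 s1 s2 s3 s4 t1 t2 t3 t4 x1 x2 x3 x4 y1 y2 y3 y4 : F)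
    (hLp1 : p1 + s1 = b1*a1)
    (hLu1 : u1 + t1 = b1*p1)
    (hLv1 : v1 + x1 = a1*s1)
    (hLw1 : w1 + y1 = a1*t1)
    (hRp1 : p2 + s1 = b1*a2)
    (hRu1 : u2 + t1 = b1*p2)
    (hRv1 : v2 + x1 = a2*s1)
    (hRw1 : w2 + y1 = a2*t1)
    (hLp2 : p2 + s2 = b2*a2)
    (hLu2 : u2 + t2 = b2*p2)
    (hLv2 : v2 + x2 = a2*s2)
    (hLw2 : w2 + y2 = a2*t2)
    (hRp2 : p3 + s2 = b2*a3)
    (hRu2 : u3 + t2 = b2*p3)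
    (hRv2 : v3 + x2 = a3*s2)
    (hRw2 : w3 + y2 = a3*t2)
    (hLp3 : p3 + s3 = b3*a3)
    (hLu3 : u3 + t3 = b3*p3)
    (hLv3 : v3 + x3 = a3*s3)
    (hLw3 : w3 + y3 = a3*t3)
    (hRp3 : p4 + s3 = b3*a4)
    (hRu3 : u4 + t3 = b3*p4)
    (hRv3 : v4 + x3 = a4*s3)
    (hRw3 : w4 + y3 = a4*t3)
    (hLp4 : p4 + s4 = b4*a4)
    (hLu4 : u4 + t4 = b4*p4)
    (hLv4 : v4 + x4 = a4*s4)
    (hLw4 : w4 + y4 = a4*t4)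
    (hRp4 : p1 + s4 = b4*a1)
    (hRu4 : u1 + t4 = b4*p1)
    (hRv4 : v1 + x4 = a1*s4)
    (hRw4 : w1 + y4 = a1*t4)
    (ha12 : a1 ≠ a2) (ha23 : a2 ≠ a3) (hb12 : b1 ≠ b2) (hb23 : b2 ≠ b3) : False := by
  have h : (a2 - a1) * ((b2 - b1) * ((a3 - a2) * (b3 - b2))) = 0 := by
    linear_combination (-a1*b4 - a4*b3 + a4*b4 + p1)*hLp1
      + (-a1*b1 + a1*b2 - a1*b3 - a1*b4 + a2*b1 - a2*b2 + a2*b3 - a4*b3 + a4*b4 + p1)*hLp2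
      + (-a1*b1 - a1*b4 + a2*b1 - a2*b2 + a3*b2 - a4*b3 + a4*b4 + p1)*hLp3
      + (-a1*b1 - a1*b3 + a2*b1 - a2*b2 + a3*b2 - a3*b3 + a4*b3 + p1)*hLp4
      + (a1 - a2)*hLu2
      + (a1 - a3)*hLu3
      + (a1 - a4)*hLu4
      + (b3)*hLv1
      + (b3)*hLv2
      + (b3)*hLv3
      + (b3)*hLv4
      + (-1)*hLw1
      + (-1)*hLw2
      + (-1)*hLw3
      + (-1)*hLw4
      + (a1*b3 + a1*b4 - a2*b3 + a4*b3 - a4*b4 - p1)*hRp1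
      + (a1*b1 - a1*b2 + a1*b3 + a1*b4 - a2*b1 + a2*b2 - a3*b3 + a4*b3 - a4*b4 - p1)*hRp2
      + (a1*b1 + a1*b4 - a2*b1 + a2*b2 - a3*b2 + a3*b3 - a4*b4 - p1)*hRp3
      + (a1*b1 - a2*b1 + a2*b2 - a3*b2 + a3*b3 - p1)*hRp4
      + (-a1 + a2)*hRu1
      + (-a1 + a3)*hRu2
      + (-a1 + a4)*hRu3
      + (-b3)*hRv1
      + (-b3)*hRv2
      + (-b3)*hRv3
      + (-b3)*hRv4
      + (1)*hRw1
      + (1)*hRw2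
      + (1)*hRw3
      + (1)*hRw4
  rcases mul_eq_zero.1 h with h | h
  · exact ha12 (by linear_combination -h)
  rcases mul_eq_zero.1 h with h | h
  · exact hb12 (by linear_combination -h)
  rcases mul_eq_zero.1 h with h | h
  · exact ha23 (by linear_combination -h)
  · exact hb23 (by linear_combination -h)

section Upper
variable {F : Type*} [Field F]

private def mkL (a p u v w : F) : PVec F 5 :=
  ⟨fun n => match n with
    | 0 => a | 1 => p | 2 => p | 3 => u | 4 => v | 5 => w | _+6 => 0,
   fun i hi => by match i with
    | n+6 => rfl⟩

private def mkR (b s t x y : F) : PVec F 5 :=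
  ⟨fun n => match n with
    | 0 => b | 1 => 0 | 2 => s | 3 => t | 4 => x | 5 => y | _+6 => 0,
   fun i hi => by match i with
    | n+6 => rfl⟩

private lemma mk_adj {a p u v w b s t x y : F}
    (h2 : p + s = b * a) (h3 : u + t = b * p) (h4 : v + x = a * s) (h5 : w + y = a * t) :
    lamAdjLR 5 (mkL a p u v w).1 (mkR b s t x y).1 := by
  refine ⟨rfl, rfl, fun i hi1 hi2 => ?_⟩
  interval_cases i
  · exact ⟨fun _ => h2, fun hm => by norm_num at hm⟩
  · exact ⟨fun _ => h3, fun hm => by norm_num at hm⟩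
  · exact ⟨fun hm => by norm_num at hm, fun _ => h4⟩
  · exact ⟨fun hm => by norm_num at hm, fun _ => h5⟩

private lemma mkL_ne {a p u v w a' p' u' v' w' : F} (i : ℕ)
    (h : (mkL a p u v w).1 i ≠ (mkL a' p' u' v' w').1 i) :
    mkL a p u v w ≠ mkL a' p' u' v' w' :=
  fun e => h (by rw [e])

private lemma mkR_ne {b s t x y b' s' t' x' y' : F} (i : ℕ)
    (h : (mkR b s t x y).1 i ≠ (mkR b' s' t' x' y' ).1 i) :
    mkR b s t x y ≠ mkR b' s' t' x' y' :=
  fun e => h (by rw [e])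

end Upper

section UpperCycle
variable {F : Type*} [Field F]

open SimpleGraph Walk in
private lemma egirth_le_ten [Fintype F] (hcard : 4 ≤ Fintype.card F) :
    (LambdaGraph F 5).egirth ≤ 10 := by
  classical
  -- find y with y ≠ 0, y ≠ 1, 2*y ≠ 1
  have hs3 : ({0, 1, (2:F)⁻¹} : Finset F).card ≤ 3 :=
    le_trans (Finset.card_insert_le _ _) (by
      exact Nat.add_le_add_right (le_trans (Finset.card_insert_le _ _) (by simp)) 1)
  have hex : ∃ y : F, y ∉ ({0, 1, (2:F)⁻¹} : Finset F) := by
    by_contra hno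
    push_neg at hno
    have : (Finset.univ : Finset F) ⊆ {0, 1, (2:F)⁻¹} := fun y _ => hno y
    have := Finset.card_le_card this
    rw [Finset.card_univ] at this
    omega
  obtain ⟨y, hy⟩ := hex
  simp only [Finset.mem_insert, Finset.mem_singleton, not_or] at hy
  obtain ⟨hy0, hy1, hyi⟩ := hy
  have hy2 : 2 * y ≠ 1 := by
    intro h
    by_cases h2 : (2:F) = 0
    · exact one_ne_zero (by rw [← h, h2, zero_mul])
    · exact hyi (eq_inv_of_mul_eq_one_left (by rw [mul_comm]; exact h))
  set L1 : PVec F 5 := mkL 0 0 0 0 0 with hL1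
  set L2 : PVec F 5 := mkL 1 0 0 0 0 with hL2
  set L3 : PVec F 5 := mkL 0 (1-2*y) (-4*y^2+4*y-1) (1-2*y) 0 with hL3
  set L4 : PVec F 5 := mkL y (y^2-2*y+1) (y^3-4*y^2+4*y-1) (2*y^2-3*y+1) (2*y^3-3*y^2+y) with hL4
  set L5 : PVec F 5 := mkL (1-y) (y-y^2) (y^2-y^3) 0 0 with hL5
  set R1 : PVec F 5 := mkR 0 0 0 0 0 with hR1
  set R2 : PVec F 5 := mkR (2*y-1) (2*y-1) 0 (2*y-1) 0 with hR2
  set R3 : PVec F 5 := mkR y (2*y-1) (2*y^2-3*y+1) (2*y-1) 0 with hR3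
  set R4 : PVec F 5 := mkR (y-1) (y-1) (y^2-y) (-y^2+2*y-1) (-y^3+2*y^2-y) with hR4
  set R5 : PVec F 5 := mkR y 0 0 0 0 with hR5
  have e1 : lamAdjLR 5 L1.1 R1.1 := mk_adj (by ring) (by ring) (by ring) (by ring)
  have e2 : lamAdjLR 5 L2.1 R1.1 := mk_adj (by ring) (by ring) (by ring) (by ring)
  have e3 : lamAdjLR 5 L2.1 R2.1 := mk_adj (by ring) (by ring) (by ring) (by ring)
  have e4 : lamAdjLR 5 L3.1 R2.1 := mk_adj (by ring) (by ring) (by ring) (by ring)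
  have e5 : lamAdjLR 5 L3.1 R3.1 := mk_adj (by ring) (by ring) (by ring) (by ring)
  have e6 : lamAdjLR 5 L4.1 R3.1 := mk_adj (by ring) (by ring) (by ring) (by ring)
  have e7 : lamAdjLR 5 L4.1 R4.1 := mk_adj (by ring) (by ring) (by ring) (by ring)
  have e8 : lamAdjLR 5 L5.1 R4.1 := mk_adj (by ring) (by ring) (by ring) (by ring)
  have e9 : lamAdjLR 5 L5.1 R5.1 := mk_adj (by ring) (by ring) (by ring) (by ring)
  have e10 : lamAdjLR 5 L1.1 R5.1 := mk_adj (by ring) (by ring) (by ring) (by ring)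
  have nL12 : L1 ≠ L2 := by rw [hL1,hL2]; exact mkL_ne 0 (show (0:F) ≠ 1 from fun h => zero_ne_one h)
  have nL13 : L1 ≠ L3 := by rw [hL1,hL3]; exact mkL_ne 1 (show (0:F) ≠ 1-2*y from fun h => hy2 (by linear_combination h))
  have nL14 : L1 ≠ L4 := by rw [hL1,hL4]; exact mkL_ne 0 (show (0:F) ≠ y from fun h => hy0 h.symm)
  have nL15 : L1 ≠ L5 := by rw [hL1,hL5]; exact mkL_ne 0 (show (0:F) ≠ 1-y from fun h => hy1 (by linear_combination h))
  have nL23 : L2 ≠ L3 := by rw [hL2,hL3]; exact mkL_ne 0 (show (1:F) ≠ 0 from one_ne_zero)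
  have nL24 : L2 ≠ L4 := by rw [hL2,hL4]; exact mkL_ne 0 (show (1:F) ≠ y from fun h => hy1 h.symm)
  have nL25 : L2 ≠ L5 := by rw [hL2,hL5]; exact mkL_ne 0 (show (1:F) ≠ 1-y from fun h => hy0 (by linear_combination h))
  have nL34 : L3 ≠ L4 := by rw [hL3,hL4]; exact mkL_ne 0 (show (0:F) ≠ y from fun h => hy0 h.symm)
  have nL35 : L3 ≠ L5 := by rw [hL3,hL5]; exact mkL_ne 0 (show (0:F) ≠ 1-y from fun h => hy1 (by linear_combination h))
  have nL45 : L4 ≠ L5 := by rw [hL4,hL5]; exact mkL_ne 0 (show y ≠ 1-y from fun h => hy2 (by linear_combination h))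
  have nR12 : R1 ≠ R2 := by rw [hR1,hR2]; exact mkR_ne 0 (show (0:F) ≠ 2*y-1 from fun h => hy2 (by linear_combination -h))
  have nR13 : R1 ≠ R3 := by rw [hR1,hR3]; exact mkR_ne 0 (show (0:F) ≠ y from fun h => hy0 h.symm)
  have nR14 : R1 ≠ R4 := by rw [hR1,hR4]; exact mkR_ne 0 (show (0:F) ≠ y-1 from fun h => hy1 (by linear_combination -h))
  have nR15 : R1 ≠ R5 := by rw [hR1,hR5]; exact mkR_ne 0 (show (0:F) ≠ y from fun h => hy0 h.symm)
  have nR23 : R2 ≠ R3 := by rw [hR2,hR3]; exact mkR_ne 0 (show 2*y-1 ≠ y from fun h => hy1 (by linear_combination h))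
  have nR24 : R2 ≠ R4 := by rw [hR2,hR4]; exact mkR_ne 0 (show 2*y-1 ≠ y-1 from fun h => hy0 (by linear_combination h))
  have nR25 : R2 ≠ R5 := by rw [hR2,hR5]; exact mkR_ne 0 (show 2*y-1 ≠ y from fun h => hy1 (by linear_combination h))
  have nR34 : R3 ≠ R4 := by rw [hR3,hR4]; exact mkR_ne 0 (show y ≠ y-1 from fun h => (one_ne_zero : (1:F) ≠ 0) (by linear_combination h))
  have nR35 : R3 ≠ R5 := by rw [hR3,hR5]; exact mkR_ne 2 (show 2*y-1 ≠ 0 from fun h => hy2 (by linear_combination h))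
  have nR45 : R4 ≠ R5 := by rw [hR4,hR5]; exact mkR_ne 0 (show y-1 ≠ y from fun h => (one_ne_zero : (1:F) ≠ 0) (by linear_combination -h))
  have a1 : (LambdaGraph F 5).Adj (Sum.inl L1) (Sum.inr R1) := e1
  have a2 : (LambdaGraph F 5).Adj (Sum.inr R1) (Sum.inl L2) := e2
  have a3 : (LambdaGraph F 5).Adj (Sum.inl L2) (Sum.inr R2) := e3
  have a4 : (LambdaGraph F 5).Adj (Sum.inr R2) (Sum.inl L3) := e4
  have a5 : (LambdaGraph F 5).Adj (Sum.inl L3) (Sum.inr R3) := e5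
  have a6 : (LambdaGraph F 5).Adj (Sum.inr R3) (Sum.inl L4) := e6
  have a7 : (LambdaGraph F 5).Adj (Sum.inl L4) (Sum.inr R4) := e7
  have a8 : (LambdaGraph F 5).Adj (Sum.inr R4) (Sum.inl L5) := e8
  have a9 : (LambdaGraph F 5).Adj (Sum.inl L5) (Sum.inr R5) := e9
  have a10 : (LambdaGraph F 5).Adj (Sum.inr R5) (Sum.inl L1) := e10
  let p : (LambdaGraph F 5).Walk (Sum.inr R1) (Sum.inl L1) :=
    SimpleGraph.Walk.cons a2 (SimpleGraph.Walk.cons a3 (SimpleGraph.Walk.cons a4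
      (SimpleGraph.Walk.cons a5 (SimpleGraph.Walk.cons a6 (SimpleGraph.Walk.cons a7
      (SimpleGraph.Walk.cons a8 (SimpleGraph.Walk.cons a9 (SimpleGraph.Walk.cons a10
      SimpleGraph.Walk.nil))))))))
  let c : (LambdaGraph F 5).Walk (Sum.inl L1) (Sum.inl L1) := SimpleGraph.Walk.cons a1 p
  have hc : c.IsCycle := by
    rw [show c = SimpleGraph.Walk.cons a1 p from rfl, SimpleGraph.Walk.cons_isCycle_iff]
    constructor
    · rw [SimpleGraph.Walk.isPath_def]
      simp [p, nL12, nL13, nL14, nL15, nL23, nL24, nL25, nL34, nL35, nL45,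
        nR12, nR13, nR14, nR15, nR23, nR24, nR25, nR34, nR35, nR45,
        nL12.symm, nL13.symm, nL14.symm, nL15.symm, nL23.symm, nL24.symm, nL25.symm,
        nL34.symm, nL35.symm, nL45.symm, nR12.symm, nR13.symm, nR14.symm, nR15.symm,
        nR23.symm, nR24.symm, nR25.symm, nR34.symm, nR35.symm, nR45.symm]
    · simp [p, Sym2.eq_iff, nR15, nR15.symm, nL12, nL13, nL14, nL15,
        nL12.symm, nL13.symm, nL14.symm, nL15.symm]
  have hle : (LambdaGraph F 5).egirth ≤ (c.length : ℕ∞) := by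
    apply iInf_le_of_le (Sum.inl L1)
    apply iInf_le_of_le c
    exact iInf_le _ hc
  have hlen : c.length = 10 := rfl
  rw [hlen] at hle
  exact_mod_cast hle

end UpperCycle

private lemma ten_le_egirth {F : Type*} [Field F] :
    (10 : ℕ∞) ≤ (LambdaGraph F 5).egirth := by
  rw [SimpleGraph.le_egirth]
  intro a w hw
  by_contra hlt
  push_neg at hlt
  have h10 : w.length < 10 := by exact_mod_cast hlt
  have hge3 := hw.three_le_length
  have hev : Even w.length := (walk_parity w).2 rfl
  have hcase : w.length = 4 ∨ w.length = 6 ∨ w.length = 8 := by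
    rcases hev with ⟨k, hk⟩; omega
  rcases hcase with hL | hL | hL
  · -- length 4
    obtain ⟨x1, h1, w1, rfl, hl1⟩ := walk_succ (n := 3) w (by omega)
    obtain ⟨x2, h2, w2, rfl, hl2⟩ := walk_succ (n := 2) w1 (by omega)
    obtain ⟨x3, h3, w3, rfl, hl3⟩ := walk_succ (n := 1) w2 (by omega)
    obtain ⟨x4, h4, w4, rfl, hl4⟩ := walk_succ (n := 0) w3 (by omega)
    have hxa : a = x4 := (SimpleGraph.Walk.eq_of_length_eq_zero hl4).symm
    subst hxa
    have hnil : w4 = SimpleGraph.Walk.nil := (SimpleGraph.Walk.nil_iff_length_eq.mpr hl4).eq_nil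
    subst hnil
    have hnd := hw.support_nodup
    cases a with
    | inl l1 =>
      cases x1 with
      | inl bad => exact h1
      | inr r1 =>
        cases x2 with
        | inr bad => exact h2
        | inl l2 =>
          cases x3 with
          | inl bad => exact h3
          | inr r2 =>
            have E1 := adj_eqs (show lamAdjLR 5 l1.1 r1.1 from h1)
            have E2 := adj_eqs (show lamAdjLR 5 l2.1 r1.1 from h2)
            have E3 := adj_eqs (show lamAdjLR 5 l2.1 r2.1 from h3)
            have E4 := adj_eqs (show lamAdjLR 5 l1.1 r2.1 from h4)
            have hA : l1.1 0 ≠ l2.1 0 := left_ne (show lamAdjLR 5 l1.1 r1.1 from h1) (show lamAdjLR 5 l2.1 r1.1 from h2) (by intro e; subst e; simp at hnd)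
            have hB : r1.1 0 ≠ r2.1 0 := right_ne (show lamAdjLR 5 l2.1 r1.1 from h2) (show lamAdjLR 5 l2.1 r2.1 from h3) (by intro e; subst e; simp at hnd)
            exact noCycle2 _ _ _ _ _ _ _ _ E1.1 E2.1 E3.1 E4.1 hA hB
    | inr rr1 =>
      cases x1 with
      | inr bad => exact h1
      | inl ll1 =>
        cases x2 with
        | inl bad => exact h2
        | inr rr2 =>
          cases x3 with
          | inr bad => exact h3
          | inl ll2 =>
            have E1 := adj_eqs (show lamAdjLR 5 ll1.1 rr1.1 from h1)
            have E2 := adj_eqs (show lamAdjLR 5 ll1.1 rr2.1 from h2)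
            have E3 := adj_eqs (show lamAdjLR 5 ll2.1 rr2.1 from h3)
            have E4 := adj_eqs (show lamAdjLR 5 ll2.1 rr1.1 from h4)
            have hA : ll1.1 0 ≠ ll2.1 0 := left_ne (show lamAdjLR 5 ll1.1 rr2.1 from h2) (show lamAdjLR 5 ll2.1 rr2.1 from h3) (by intro e; subst e; simp at hnd)
            have hB : rr2.1 0 ≠ rr1.1 0 := right_ne (show lamAdjLR 5 ll2.1 rr2.1 from h3) (show lamAdjLR 5 ll2.1 rr1.1 from h4) (by intro e; subst e; simp at hnd)
            exact noCycle2 _ _ _ _ _ _ _ _ E2.1 E3.1 E4.1 E1.1 hA hB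
  · -- length 6
    obtain ⟨x1, h1, w1, rfl, hl1⟩ := walk_succ (n := 5) w (by omega)
    obtain ⟨x2, h2, w2, rfl, hl2⟩ := walk_succ (n := 4) w1 (by omega)
    obtain ⟨x3, h3, w3, rfl, hl3⟩ := walk_succ (n := 3) w2 (by omega)
    obtain ⟨x4, h4, w4, rfl, hl4⟩ := walk_succ (n := 2) w3 (by omega)
    obtain ⟨x5, h5, w5, rfl, hl5⟩ := walk_succ (n := 1) w4 (by omega)
    obtain ⟨x6, h6, w6, rfl, hl6⟩ := walk_succ (n := 0) w5 (by omega)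
    have hxa : a = x6 := (SimpleGraph.Walk.eq_of_length_eq_zero hl6).symm
    subst hxa
    have hnil : w6 = SimpleGraph.Walk.nil := (SimpleGraph.Walk.nil_iff_length_eq.mpr hl6).eq_nil
    subst hnil
    have hnd := hw.support_nodup
    cases a with
    | inl l1 =>
      cases x1 with
      | inl bad => exact h1
      | inr r1 =>
        cases x2 with
        | inr bad => exact h2
        | inl l2 =>
          cases x3 with
          | inl bad => exact h3
          | inr r2 =>
            cases x4 with
            | inr bad => exact h4
            | inl l3 =>
              cases x5 with
              | inl bad => exact h5
              | inr r3 =>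
                have E1 := adj_eqs (show lamAdjLR 5 l1.1 r1.1 from h1)
                have E2 := adj_eqs (show lamAdjLR 5 l2.1 r1.1 from h2)
                have E3 := adj_eqs (show lamAdjLR 5 l2.1 r2.1 from h3)
                have E4 := adj_eqs (show lamAdjLR 5 l3.1 r2.1 from h4)
                have E5 := adj_eqs (show lamAdjLR 5 l3.1 r3.1 from h5)
                have E6 := adj_eqs (show lamAdjLR 5 l1.1 r3.1 from h6)
                have hA : l1.1 0 ≠ l2.1 0 := left_ne (show lamAdjLR 5 l1.1 r1.1 from h1) (show lamAdjLR 5 l2.1 r1.1 from h2) (by intro e; subst e; simp at hnd)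
                have hB12 : r1.1 0 ≠ r2.1 0 := right_ne (show lamAdjLR 5 l2.1 r1.1 from h2) (show lamAdjLR 5 l2.1 r2.1 from h3) (by intro e; subst e; simp at hnd)
                have hB31 : r3.1 0 ≠ r1.1 0 := right_ne (show lamAdjLR 5 l1.1 r3.1 from h6) (show lamAdjLR 5 l1.1 r1.1 from h1) (by intro e; subst e; simp at hnd)
                exact noCycle3 _ _ _ _ _ _ _ _ _ _ _ _ _ _ _ _ _ _ E1.1 E2.1 E3.1 E4.1 E5.1 E6.1 E1.2.1 E2.2.1 E3.2.1 E4.2.1 E5.2.1 E6.2.1 hA hB12 hB31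
    | inr rr1 =>
      cases x1 with
      | inr bad => exact h1
      | inl ll1 =>
        cases x2 with
        | inl bad => exact h2
        | inr rr2 =>
          cases x3 with
          | inr bad => exact h3
          | inl ll2 =>
            cases x4 with
            | inl bad => exact h4
            | inr rr3 =>
              cases x5 with
              | inr bad => exact h5
              | inl ll3 =>
                have E1 := adj_eqs (show lamAdjLR 5 ll1.1 rr1.1 from h1)
                have E2 := adj_eqs (show lamAdjLR 5 ll1.1 rr2.1 from h2)
                have E3 := adj_eqs (show lamAdjLR 5 ll2.1 rr2.1 from h3)
                have E4 := adj_eqs (show lamAdjLR 5 ll2.1 rr3.1 from h4)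
                have E5 := adj_eqs (show lamAdjLR 5 ll3.1 rr3.1 from h5)
                have E6 := adj_eqs (show lamAdjLR 5 ll3.1 rr1.1 from h6)
                have hA : ll1.1 0 ≠ ll2.1 0 := left_ne (show lamAdjLR 5 ll1.1 rr2.1 from h2) (show lamAdjLR 5 ll2.1 rr2.1 from h3) (by intro e; subst e; simp at hnd)
                have hB12 : rr2.1 0 ≠ rr3.1 0 := right_ne (show lamAdjLR 5 ll2.1 rr2.1 from h3) (show lamAdjLR 5 ll2.1 rr3.1 from h4) (by intro e; subst e; simp at hnd)
                have hB31 : rr1.1 0 ≠ rr2.1 0 := right_ne (show lamAdjLR 5 ll1.1 rr1.1 from h1) (show lamAdjLR 5 ll1.1 rr2.1 from h2) (by intro e; subst e; simp at hnd)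
                exact noCycle3 _ _ _ _ _ _ _ _ _ _ _ _ _ _ _ _ _ _ E2.1 E3.1 E4.1 E5.1 E6.1 E1.1 E2.2.1 E3.2.1 E4.2.1 E5.2.1 E6.2.1 E1.2.1 hA hB12 hB31
  · -- length 8
    obtain ⟨x1, h1, w1, rfl, hl1⟩ := walk_succ (n := 7) w (by omega)
    obtain ⟨x2, h2, w2, rfl, hl2⟩ := walk_succ (n := 6) w1 (by omega)
    obtain ⟨x3, h3, w3, rfl, hl3⟩ := walk_succ (n := 5) w2 (by omega)
    obtain ⟨x4, h4, w4, rfl, hl4⟩ := walk_succ (n := 4) w3 (by omega)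
    obtain ⟨x5, h5, w5, rfl, hl5⟩ := walk_succ (n := 3) w4 (by omega)
    obtain ⟨x6, h6, w6, rfl, hl6⟩ := walk_succ (n := 2) w5 (by omega)
    obtain ⟨x7, h7, w7, rfl, hl7⟩ := walk_succ (n := 1) w6 (by omega)
    obtain ⟨x8, h8, w8, rfl, hl8⟩ := walk_succ (n := 0) w7 (by omega)
    have hxa : a = x8 := (SimpleGraph.Walk.eq_of_length_eq_zero hl8).symm
    subst hxa
    have hnil : w8 = SimpleGraph.Walk.nil := (SimpleGraph.Walk.nil_iff_length_eq.mpr hl8).eq_nil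
    subst hnil
    have hnd := hw.support_nodup
    cases a with
    | inl l1 =>
      cases x1 with
      | inl bad => exact h1
      | inr r1 =>
        cases x2 with
        | inr bad => exact h2
        | inl l2 =>
          cases x3 with
          | inl bad => exact h3
          | inr r2 =>
            cases x4 with
            | inr bad => exact h4
            | inl l3 =>
              cases x5 with
              | inl bad => exact h5
              | inr r3 =>
                cases x6 with
                | inr bad => exact h6
                | inl l4 =>
                  cases x7 with
                  | inl bad => exact h7
                  | inr r4 =>
                    have E1 := adj_eqs (show lamAdjLR 5 l1.1 r1.1 from h1)
                    have E2 := adj_eqs (show lamAdjLR 5 l2.1 r1.1 from h2)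
                    have E3 := adj_eqs (show lamAdjLR 5 l2.1 r2.1 from h3)
                    have E4 := adj_eqs (show lamAdjLR 5 l3.1 r2.1 from h4)
                    have E5 := adj_eqs (show lamAdjLR 5 l3.1 r3.1 from h5)
                    have E6 := adj_eqs (show lamAdjLR 5 l4.1 r3.1 from h6)
                    have E7 := adj_eqs (show lamAdjLR 5 l4.1 r4.1 from h7)
                    have E8 := adj_eqs (show lamAdjLR 5 l1.1 r4.1 from h8)
                    have hA12 : l1.1 0 ≠ l2.1 0 := left_ne (show lamAdjLR 5 l1.1 r1.1 from h1) (show lamAdjLR 5 l2.1 r1.1 from h2) (by intro e; subst e; simp at hnd)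
                    have hA23 : l2.1 0 ≠ l3.1 0 := left_ne (show lamAdjLR 5 l2.1 r2.1 from h3) (show lamAdjLR 5 l3.1 r2.1 from h4) (by intro e; subst e; simp at hnd)
                    have hB12 : r1.1 0 ≠ r2.1 0 := right_ne (show lamAdjLR 5 l2.1 r1.1 from h2) (show lamAdjLR 5 l2.1 r2.1 from h3) (by intro e; subst e; simp at hnd)
                    have hB23 : r2.1 0 ≠ r3.1 0 := right_ne (show lamAdjLR 5 l3.1 r2.1 from h4) (show lamAdjLR 5 l3.1 r3.1 from h5) (by intro e; subst e; simp at hnd)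
                    exact noCycle4 _ _ _ _ _ _ _ _ _ _ _ _ _ _ _ _ _ _ _ _ _ _ _ _ _ _ _ _ _ _ _ _ _ _ _ _ _ _ _ _ E1.1 E1.2.1 E1.2.2.1 E1.2.2.2 E2.1 E2.2.1 E2.2.2.1 E2.2.2.2 E3.1 E3.2.1 E3.2.2.1 E3.2.2.2 E4.1 E4.2.1 E4.2.2.1 E4.2.2.2 E5.1 E5.2.1 E5.2.2.1 E5.2.2.2 E6.1 E6.2.1 E6.2.2.1 E6.2.2.2 E7.1 E7.2.1 E7.2.2.1 E7.2.2.2 E8.1 E8.2.1 E8.2.2.1 E8.2.2.2 hA12 hA23 hB12 hB23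
    | inr rr1 =>
      cases x1 with
      | inr bad => exact h1
      | inl ll1 =>
        cases x2 with
        | inl bad => exact h2
        | inr rr2 =>
          cases x3 with
          | inr bad => exact h3
          | inl ll2 =>
            cases x4 with
            | inl bad => exact h4
            | inr rr3 =>
              cases x5 with
              | inr bad => exact h5
              | inl ll3 =>
                cases x6 with
                | inl bad => exact h6
                | inr rr4 =>
                  cases x7 with
                  | inr bad => exact h7
                  | inl ll4 =>
                    have E1 := adj_eqs (show lamAdjLR 5 ll1.1 rr1.1 from h1)
                    have E2 := adj_eqs (show lamAdjLR 5 ll1.1 rr2.1 from h2)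
                    have E3 := adj_eqs (show lamAdjLR 5 ll2.1 rr2.1 from h3)
                    have E4 := adj_eqs (show lamAdjLR 5 ll2.1 rr3.1 from h4)
                    have E5 := adj_eqs (show lamAdjLR 5 ll3.1 rr3.1 from h5)
                    have E6 := adj_eqs (show lamAdjLR 5 ll3.1 rr4.1 from h6)
                    have E7 := adj_eqs (show lamAdjLR 5 ll4.1 rr4.1 from h7)
                    have E8 := adj_eqs (show lamAdjLR 5 ll4.1 rr1.1 from h8)
                    have hA12 : ll1.1 0 ≠ ll2.1 0 := left_ne (show lamAdjLR 5 ll1.1 rr2.1 from h2) (show lamAdjLR 5 ll2.1 rr2.1 from h3) (by intro e; subst e; simp at hnd)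
                    have hA23 : ll2.1 0 ≠ ll3.1 0 := left_ne (show lamAdjLR 5 ll2.1 rr3.1 from h4) (show lamAdjLR 5 ll3.1 rr3.1 from h5) (by intro e; subst e; simp at hnd)
                    have hB12 : rr2.1 0 ≠ rr3.1 0 := right_ne (show lamAdjLR 5 ll2.1 rr2.1 from h3) (show lamAdjLR 5 ll2.1 rr3.1 from h4) (by intro e; subst e; simp at hnd)
                    have hB23 : rr3.1 0 ≠ rr4.1 0 := right_ne (show lamAdjLR 5 ll3.1 rr3.1 from h5) (show lamAdjLR 5 ll3.1 rr4.1 from h6) (by intro e; subst e; simp at hnd)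
                    exact noCycle4 _ _ _ _ _ _ _ _ _ _ _ _ _ _ _ _ _ _ _ _ _ _ _ _ _ _ _ _ _ _ _ _ _ _ _ _ _ _ _ _ E2.1 E2.2.1 E2.2.2.1 E2.2.2.2 E3.1 E3.2.1 E3.2.2.1 E3.2.2.2 E4.1 E4.2.1 E4.2.2.1 E4.2.2.2 E5.1 E5.2.1 E5.2.2.1 E5.2.2.2 E6.1 E6.2.1 E6.2.2.1 E6.2.2.2 E7.1 E7.2.1 E7.2.2.1 E7.2.2.2 E8.1 E8.2.1 E8.2.2.1 E8.2.2.2 E1.1 E1.2.1 E1.2.2.1 E1.2.2.2 hA12 hA23 hB12 hB23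

theorem lambda5_girth (q : ℕ) (hq : IsPrimePow q) (hq3 : 3 < q)
    (F : Type*) [Field F] [Fintype F] (hF : Fintype.card F = q) :
    (LambdaGraph F 5).egirth = 10 := by
  have hcard : 4 ≤ Fintype.card F := by rw [hF]; omega
  exact le_antisymm (egirth_le_ten hcard) ten_le_egirth
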